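/- Let n* : [0,1] → S² be the cholesteric one-dimensional minimiser given in Euler angles by n*(z) = (cos θ(z) cos(tz), cos θ(z) sin(tz), sin θ(z)), where θ solves θ'(z)² = D − t² cos²θ(z) with θ(0) = 0, θ(1) = π/2 and D > t². Then the Lagrange multiplier λ(z) := |n*'(z)|² + 2t n*·(∇×n*) satisfies λ = −t² + θ'(0)² + 2t² sin²θ(z), and in particular |λ(z)| ≤ θ'(0)² + t² for all z. -/
import Mathlib


open Real

/-- For the one-dimensional cholesteric minimiser
`n*(z) = (cos θ(z) cos(tz), cos θ(z) sin(tz), sin θ(z))` with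
`θ'² = D − t² cos²θ`, `θ(0) = 0`, `θ(1) = π/2`, the Lagrange multiplier
`λ(z) = |n*'(z)|² + 2t n*·(∇×n*)` satisfies
`λ = −t² + θ'(0)² + 2t² sin²θ(z)` and `|λ(z)| ≤ θ'(0)² + t²`. -/
theorem cholesteric_lagrange_multiplier
    (t D : ℝ) (hD : t^2 < D)
    (θ : ℝ → ℝ) (hθ : Differentiable ℝ θ)
    (hode : ∀ z ∈ Set.Icc (0:ℝ) 1, (deriv θ z)^2 = D - t^2 * (cos (θ z))^2)
    (hθ0 : θ 0 = 0) (hθ1 : θ 1 = π/2)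
    (n : ℝ → Fin 3 → ℝ)
    (hn : ∀ z, n z = ![cos (θ z) * cos (t*z), cos (θ z) * sin (t*z), sin (θ z)])
    (lam : ℝ → ℝ)
    (hlam : ∀ z, lam z = (∑ i, (deriv (fun w => n w i) z)^2)
      + 2*t*((n z 1) * deriv (fun w => n w 0) z - (n z 0) * deriv (fun w => n w 1) z)) :
    ∀ z ∈ Set.Icc (0:ℝ) 1,
      lam z = -t^2 + (deriv θ 0)^2 + 2*t^2*(sin (θ z))^2 ∧
      |lam z| ≤ (deriv θ 0)^2 + t^2 := by
  intro z hz
  have h0 : (fun w => n w 0) = fun w => cos (θ w) * cos (t*w) := by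
    funext w; rw [hn w]; simp
  have h1 : (fun w => n w 1) = fun w => cos (θ w) * sin (t*w) := by
    funext w; rw [hn w]; simp
  have h2 : (fun w => n w 2) = fun w => sin (θ w) := by
    funext w; rw [hn w]; simp
  have hθz : HasDerivAt θ (deriv θ z) z := (hθ z).hasDerivAt
  have htw : HasDerivAt (fun w : ℝ => t * w) t z := by
    simpa using (hasDerivAt_id z).const_mul t
  have hA : HasDerivAt (fun w => cos (θ w) * cos (t*w))
      ((-sin (θ z) * deriv θ z) * cos (t*z) + cos (θ z) * (-sin (t*z) * t)) z :=
    (hθz.cos).mul (htw.cos)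
  have hB : HasDerivAt (fun w => cos (θ w) * sin (t*w))
      ((-sin (θ z) * deriv θ z) * sin (t*z) + cos (θ z) * (cos (t*z) * t)) z :=
    (hθz.cos).mul (htw.sin)
  have hC : HasDerivAt (fun w => sin (θ w)) (cos (θ z) * deriv θ z) z := hθz.sin
  have dA : deriv (fun w => n w 0) z
      = (-sin (θ z) * deriv θ z) * cos (t*z) + cos (θ z) * (-sin (t*z) * t) := by
    rw [h0]; exact hA.deriv
  have dB : deriv (fun w => n w 1) z
      = (-sin (θ z) * deriv θ z) * sin (t*z) + cos (θ z) * (cos (t*z) * t) := by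
    rw [h1]; exact hB.deriv
  have dC : deriv (fun w => n w 2) z = cos (θ z) * deriv θ z := by
    rw [h2]; exact hC.deriv
  have hO := hode z hz
  have hO0 := hode 0 (by constructor <;> norm_num)
  rw [hθ0, Real.cos_zero] at hO0
  have E3 := sin_sq_add_cos_sq (θ z)
  have E4 := sin_sq_add_cos_sq (t*z)
  have hval : lam z = -t^2 + (deriv θ 0)^2 + 2*t^2*(sin (θ z))^2 := by
    rw [hlam z, Fin.sum_univ_three, dA, dB, dC, hn z]
    simp only [Matrix.cons_val_zero, Matrix.cons_val_one, Matrix.head_cons]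
    linear_combination (sin (θ z)^2 * (deriv θ z)^2 + cos (θ z)^2 * t^2
        - 2*t^2*cos (θ z)^2) * E4 + ((deriv θ z)^2 - 2*t^2) * E3 + hO - hO0
  refine ⟨hval, ?_⟩
  rw [hval]
  have hs1 : (sin (θ z))^2 ≤ 1 := sin_sq_le_one (θ z)
  have hs0 : (0:ℝ) ≤ (sin (θ z))^2 := sq_nonneg _
  have h00 : (0:ℝ) ≤ (deriv θ 0)^2 := sq_nonneg _
  rw [abs_le]
  constructor <;> nlinarith
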